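/- Let C ≥ 1, A, γ, σ > 0 and b ∈ Σ(C,A,γ,σ) with invariant density q_b. Then for every integer n ≥ 2 the integrals ∫_ℝ |x|^{n−2}·x·b(x)·q_b(x) dx and ∫_ℝ |x|^{n−2}·q_b(x) dx are absolutely convergent and satisfy n·∫_ℝ |x|^{n−2}·x·b(x)·q_b(x) dx + (n(n−1)/2)·σ²·∫_ℝ |x|^{n−2}·q_b(x) dx = 0. -/

import Mathlib

open MeasureTheory
open Real Set
set_option maxHeartbeats 2000000

lemma integrableOn_pow_mul_exp_neg (m : ℕ) {c : ℝ} (hc : 0 < c) :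
    IntegrableOn (fun x : ℝ => x ^ m * Real.exp (-c * x)) (Ioi 0) := by
  have := integrableOn_rpow_mul_exp_neg_mul_rpow (s := (m:ℝ)) (p := 1) (b := c)
    (lt_of_lt_of_le neg_one_lt_zero (Nat.cast_nonneg m)) one_pos hc
  apply this.congr_fun ?_ measurableSet_Ioi
  intro x hx
  simp [Real.rpow_natCast]

section
variable {b : ℝ → ℝ} {A γ σ : ℝ}

lemma decay_right (hbc : Continuous b) (hσ : 0 < σ) (hA : 0 < A)
    (hsign : ∀ x : ℝ, A ≤ |x| → b x * Real.sign x / σ ^ 2 ≤ -γ)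
    {x : ℝ} (hx : A ≤ x) :
    Real.exp (∫ u in (0:ℝ)..x, 2 * b u / σ ^ 2) ≤
      Real.exp (∫ u in (0:ℝ)..A, 2 * b u / σ ^ 2) * Real.exp (-(2*γ) * (x - A)) := by
  have hh : Continuous (fun u => 2 * b u / σ ^ 2) := by continuity
  rw [← Real.exp_add, Real.exp_le_exp]
  have hsplit : (∫ u in (0:ℝ)..A, 2 * b u / σ ^ 2) + (∫ u in A..x, 2 * b u / σ ^ 2)
      = ∫ u in (0:ℝ)..x, 2 * b u / σ ^ 2 :=
    intervalIntegral.integral_add_adjacent_intervals (hh.intervalIntegrable _ _)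
      (hh.intervalIntegrable _ _)
  rw [← hsplit]
  have hbound : (∫ u in A..x, 2 * b u / σ ^ 2) ≤ ∫ u in A..x, -(2*γ) := by
    apply intervalIntegral.integral_mono_on hx (hh.intervalIntegrable _ _)
      (intervalIntegrable_const)
    intro u hu
    have huA : A ≤ u := hu.1
    have hu0 : 0 < u := lt_of_lt_of_le hA huA
    have := hsign u (by rwa [abs_of_pos hu0])
    rw [Real.sign_of_pos hu0, mul_one] at this
    rw [mul_div_assoc]
    linarith
  have := intervalIntegral.integral_const (a := A) (b := x) (-(2*γ))
  rw [this, smul_eq_mul] at hbound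
  nlinarith [hbound]

lemma decay_left (hbc : Continuous b) (hσ : 0 < σ) (hA : 0 < A)
    (hsign : ∀ x : ℝ, A ≤ |x| → b x * Real.sign x / σ ^ 2 ≤ -γ)
    {x : ℝ} (hx : x ≤ -A) :
    Real.exp (∫ u in (0:ℝ)..x, 2 * b u / σ ^ 2) ≤
      Real.exp (∫ u in (0:ℝ)..(-A), 2 * b u / σ ^ 2) * Real.exp ((2*γ) * (x + A)) := by
  have hh : Continuous (fun u => 2 * b u / σ ^ 2) := by continuity
  rw [← Real.exp_add, Real.exp_le_exp]
  have hsplit : (∫ u in (0:ℝ)..x, 2 * b u / σ ^ 2) + (∫ u in x..(-A), 2 * b u / σ ^ 2)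
      = ∫ u in (0:ℝ)..(-A), 2 * b u / σ ^ 2 :=
    intervalIntegral.integral_add_adjacent_intervals (hh.intervalIntegrable _ _)
      (hh.intervalIntegrable _ _)
  have hbound : (∫ u in x..(-A), (2*γ)) ≤ ∫ u in x..(-A), 2 * b u / σ ^ 2 := by
    apply intervalIntegral.integral_mono_on hx intervalIntegrable_const
      (hh.intervalIntegrable _ _)
    intro u hu
    have huA : u ≤ -A := hu.2
    have hu0 : u < 0 := lt_of_le_of_lt huA (by linarith)
    have := hsign u (by rw [abs_of_neg hu0]; linarith)
    rw [Real.sign_of_neg hu0, mul_neg_one, neg_div, neg_le] at this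
    rw [mul_div_assoc]
    linarith
  have := intervalIntegral.integral_const (a := x) (b := -A) ((2*γ))
  rw [this, smul_eq_mul] at hbound
  nlinarith [hbound]

lemma integrable_pow_mul_F (hbc : Continuous b) (hσ : 0 < σ) (hA : 0 < A) (hγ : 0 < γ)
    (hsign : ∀ x : ℝ, A ≤ |x| → b x * Real.sign x / σ ^ 2 ≤ -γ) (m : ℕ) :
    Integrable (fun x : ℝ => |x| ^ m * Real.exp (∫ u in (0:ℝ)..x, 2 * b u / σ ^ 2)) := by
  set h : ℝ → ℝ := fun u => 2 * b u / σ ^ 2 with hh_def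
  have hh : Continuous h := by fun_prop
  set F : ℝ → ℝ := fun x => Real.exp (∫ u in (0:ℝ)..x, h u) with hF_def
  have hGc : Continuous (fun x : ℝ => ∫ u in (0:ℝ)..x, h u) :=
    continuous_iff_continuousAt.2
      (fun x => ((hh.integral_hasStrictDerivAt 0 x).hasDerivAt).continuousAt)
  have hFc : Continuous F := Real.continuous_exp.comp hGc
  have hfc : Continuous (fun x : ℝ => |x| ^ m * F x) := by fun_prop
  have hint : IntegrableOn (fun x : ℝ => x ^ m * Real.exp (-(2*γ) * x)) (Ioi A) :=
    (integrableOn_pow_mul_exp_neg m (by positivity : (0:ℝ) < 2*γ)).mono_set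
        (Ioi_subset_Ioi hA.le)
  have hIoi : IntegrableOn (fun x : ℝ => |x| ^ m * F x) (Ioi A) := by
    apply Integrable.mono' (hint.const_mul (F A * Real.exp ((2*γ) * A)))
    · exact hfc.aestronglyMeasurable.restrict
    · filter_upwards [ae_restrict_mem measurableSet_Ioi] with x hx
      rw [mem_Ioi] at hx
      have hx0 : 0 < x := lt_trans hA hx
      have hd := decay_right hbc hσ hA hsign (le_of_lt hx)
      rw [Real.norm_eq_abs, abs_of_nonneg (by positivity), abs_of_pos hx0]
      calc x ^ m * F x ≤ x ^ m * (F A * Real.exp (-(2*γ) * (x - A))) :=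
            mul_le_mul_of_nonneg_left hd (by positivity)
        _ = F A * Real.exp ((2*γ) * A) * (x ^ m * Real.exp (-(2*γ) * x)) := by
            rw [show -(2*γ) * (x - A) = (2*γ)*A + -(2*γ)*x by ring, Real.exp_add]; ring
  have hIic : IntegrableOn (fun x : ℝ => |x| ^ m * F x) (Iic (-A)) := by
    rw [← (Measure.measurePreserving_neg (volume : Measure ℝ)).integrableOn_comp_preimage
      (Homeomorph.neg ℝ).measurableEmbedding]
    have hpre : (Neg.neg ⁻¹' (Iic (-A)) : Set ℝ) = Ici A := by
      ext x; simp [le_neg]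
    rw [hpre, integrableOn_Ici_iff_integrableOn_Ioi]
    apply Integrable.mono' (hint.const_mul (F (-A) * Real.exp ((2*γ) * A)))
    · exact ((hfc.comp continuous_neg).aestronglyMeasurable).restrict
    · filter_upwards [ae_restrict_mem measurableSet_Ioi] with x hx
      rw [mem_Ioi] at hx
      have hx0 : 0 < x := lt_trans hA hx
      have hd := decay_left hbc hσ hA hsign (x := -x) (by linarith)
      simp only [Function.comp_apply, abs_neg]
      rw [Real.norm_eq_abs, abs_of_nonneg (by positivity), abs_of_pos hx0]
      calc x ^ m * F (-x) ≤ x ^ m * (F (-A) * Real.exp ((2*γ) * (-x + A))) :=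
            mul_le_mul_of_nonneg_left hd (by positivity)
        _ = F (-A) * Real.exp ((2*γ) * A) * (x ^ m * Real.exp (-(2*γ) * x)) := by
            rw [show (2*γ) * (-x + A) = (2*γ)*A + -(2*γ)*x by ring, Real.exp_add]; ring
  have hIcc : IntegrableOn (fun x : ℝ => |x| ^ m * F x) (Ioc (-A) A) :=
    (hfc.integrableOn_Icc (a := -A) (b := A)).mono_set Ioc_subset_Icc_self
  rw [← integrableOn_univ, ← Iic_union_Ioi (a := (-A : ℝ)),
    ← Ioc_union_Ioi_eq_Ioi (by linarith : (-A:ℝ) ≤ A)]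
  exact hIic.union (hIcc.union hIoi)


lemma tendsto_pow_exp_decay (hγ : 0 < γ) (k : ℕ) (K : ℝ) :
    Filter.Tendsto (fun x : ℝ => K * (x ^ k * Real.exp (-(2*γ) * x)))
      Filter.atTop (nhds 0) := by
  have h2γ : (0:ℝ) < 2*γ := by positivity
  have h1 : Filter.Tendsto (fun x : ℝ => ((2*γ)*x) ^ k * Real.exp (-((2*γ)*x)))
      Filter.atTop (nhds 0) :=
    (tendsto_pow_mul_exp_neg_atTop_nhds_zero k).comp
      (Filter.Tendsto.const_mul_atTop h2γ Filter.tendsto_id)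
  have h2 := h1.const_mul (K * (1/(2*γ))^k)
  rw [mul_zero] at h2
  apply h2.congr
  intro x
  rw [mul_pow]
  have : ((1:ℝ)/(2*γ))^k * (2*γ)^k = 1 := by
    rw [← mul_pow, one_div, inv_mul_cancel₀ (ne_of_gt h2γ), one_pow]
  calc K * (1/(2*γ))^k * ((2*γ)^k * x^k * Real.exp (-((2*γ)*x)))
      = ((1/(2*γ))^k * (2*γ)^k) * (K * (x^k * Real.exp (-(2*γ)*x))) := by ring_nf
    _ = K * (x^k * Real.exp (-(2*γ)*x)) := by rw [this, one_mul]

lemma key_zero (hbc : Continuous b) {C : ℝ} (hgrow : ∀ x : ℝ, |b x| ≤ C * (1 + |x|))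
    (hσ : 0 < σ) (hA : 0 < A) (hγ : 0 < γ)
    (hsign : ∀ x : ℝ, A ≤ |x| → b x * Real.sign x / σ ^ 2 ≤ -γ) (k : ℕ) :
    Integrable (fun x : ℝ => |x| ^ k * x * (2 * b x / σ ^ 2) *
        Real.exp (∫ u in (0:ℝ)..x, 2 * b u / σ ^ 2)) ∧
    ∫ x : ℝ, (((k:ℝ)+1) * |x| ^ k * Real.exp (∫ u in (0:ℝ)..x, 2 * b u / σ ^ 2)
        + |x| ^ k * x * (2 * b x / σ ^ 2) * Real.exp (∫ u in (0:ℝ)..x, 2 * b u / σ ^ 2)) = 0 := by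
  set h : ℝ → ℝ := fun u => 2 * b u / σ ^ 2 with hh_def
  have hh : Continuous h := by fun_prop
  set F : ℝ → ℝ := fun x => Real.exp (∫ u in (0:ℝ)..x, h u) with hF_def
  have hF : ∀ x : ℝ, HasDerivAt F (h x * F x) x := by
    intro x
    have := ((hh.integral_hasStrictDerivAt 0 x).hasDerivAt).exp
    rw [mul_comm] at this
    exact this
  have hGc : Continuous (fun x : ℝ => ∫ u in (0:ℝ)..x, h u) :=
    continuous_iff_continuousAt.2
      (fun x => ((hh.integral_hasStrictDerivAt 0 x).hasDerivAt).continuousAt)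
  have hFc : Continuous F := Real.continuous_exp.comp hGc
  have hFpos : ∀ x, 0 < F x := fun x => Real.exp_pos _
  have hC0 : (0:ℝ) ≤ C := le_trans (abs_nonneg (b 0)) (by simpa using hgrow 0)
  -- integrability of the pieces
  have hIpow : ∀ m : ℕ, Integrable (fun x : ℝ => |x| ^ m * F x) :=
    fun m => integrable_pow_mul_F hbc hσ hA hγ hsign m
  have hI2 : Integrable (fun x : ℝ => |x| ^ k * x * h x * F x) := by
    apply Integrable.mono' (((hIpow (k+1)).add (hIpow (k+2))).const_mul (2*C/σ^2))
    · exact (((((continuous_abs.pow k).mul continuous_id).mul hh).mul hFc)).aestronglyMeasurable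
    · filter_upwards with x
      have hb' : |h x| ≤ (2*C/σ^2) * (1 + |x|) := by
        rw [hh_def]
        simp only []
        rw [abs_div, abs_mul, abs_two, abs_of_pos (show (0:ℝ) < σ^2 by positivity)]
        rw [div_le_iff₀ (show (0:ℝ) < σ^2 by positivity)]
        calc 2 * |b x| ≤ 2 * (C * (1+|x|)) := by linarith [hgrow x]
          _ = 2*C/σ^2 * (1+|x|) * σ^2 := by field_simp
      rw [Real.norm_eq_abs, abs_mul, abs_mul, abs_mul, abs_pow, abs_abs,
        abs_of_pos (hFpos x), Pi.add_apply]
      have hxk : (0:ℝ) ≤ |x|^k := by positivity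
      calc |x|^k * |x| * |h x| * F x ≤ |x|^k * |x| * ((2*C/σ^2) * (1+|x|)) * F x := by
            apply mul_le_mul_of_nonneg_right _ (hFpos x).le
            apply mul_le_mul_of_nonneg_left hb' (by positivity)
        _ = (2*C/σ^2) * (|x|^(k+1) * F x + |x|^(k+2) * F x) := by ring
  set D : ℝ → ℝ := fun x => ((k:ℝ)+1) * |x| ^ k * F x + |x| ^ k * x * h x * F x with hD_def
  have hD : Integrable D := by
    apply (((hIpow k).const_mul ((k:ℝ)+1)).add hI2).congr
    filter_upwards with x
    simp only [hD_def, Pi.add_apply]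
    ring
  have hK1 : (0:ℝ) < F A * Real.exp ((2*γ)*A) := by positivity
  -- right half
  have hderivR : ∀ x ∈ Ioi (0:ℝ), HasDerivAt (fun y : ℝ => y^(k+1) * F y) (D x) x := by
    intro x hx
    rw [mem_Ioi] at hx
    have h1 := (hasDerivAt_pow (k+1) x).mul (hF x)
    simp only [Nat.add_sub_cancel, Nat.cast_add, Nat.cast_one] at h1
    refine h1.congr_deriv ?_
    rw [hD_def]
    simp only []
    rw [abs_of_pos hx]
    ring
  have htendR : Filter.Tendsto (fun y : ℝ => y^(k+1) * F y) Filter.atTop (nhds 0) := by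
    apply squeeze_zero_norm' ?_ (tendsto_pow_exp_decay hγ (k+1) (F A * Real.exp ((2*γ)*A)))
    filter_upwards [Filter.eventually_ge_atTop A] with x hx
    have hx0 : 0 < x := lt_of_lt_of_le hA hx
    have hd := decay_right hbc hσ hA hsign hx
    rw [Real.norm_eq_abs, abs_mul, abs_pow, abs_of_pos hx0, abs_of_pos (hFpos x)]
    calc x^(k+1) * F x ≤ x^(k+1) * (F A * Real.exp (-(2*γ)*(x-A))) :=
          mul_le_mul_of_nonneg_left hd (by positivity)
      _ = F A * Real.exp ((2*γ)*A) * (x^(k+1) * Real.exp (-(2*γ)*x)) := by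
          rw [show -(2*γ)*(x-A) = (2*γ)*A + -(2*γ)*x by ring, Real.exp_add]; ring
  have hintR : ∫ x in Ioi (0:ℝ), D x = 0 := by
    have := integral_Ioi_of_hasDerivAt_of_tendsto (a := (0:ℝ))
      (f := fun y : ℝ => y^(k+1) * F y) (f' := D)
      (((continuous_pow (k+1)).mul hFc).continuousWithinAt) hderivR
      hD.integrableOn htendR
    rw [this]
    simp
  -- left half
  have hderivL : ∀ x ∈ Iio (0:ℝ), HasDerivAt (fun y : ℝ => -((-y)^(k+1)) * F y) (D x) x := by
    intro x hx
    rw [mem_Iio] at hx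
    have hu : HasDerivAt (fun y : ℝ => (-y)^(k+1)) ((↑(k+1) * (-x)^k) * (-1)) x := by
      have := (hasDerivAt_pow (k+1) (-x)).comp x (hasDerivAt_neg x)
      simpa [Nat.add_sub_cancel, Function.comp_def] using this
    have h1 := hu.neg.mul (hF x)
    simp only [Pi.neg_apply] at h1
    refine h1.congr_deriv ?_
    rw [hD_def]
    simp only []
    rw [abs_of_neg hx]
    push_cast
    ring
  have htendL : Filter.Tendsto (fun y : ℝ => -((-y)^(k+1)) * F y) Filter.atBot (nhds 0) := by
    apply squeeze_zero_norm'
      (a := fun x : ℝ => (F (-A) * Real.exp ((2*γ)*A)) * ((-x)^(k+1) * Real.exp (-(2*γ) * (-x))))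
    · filter_upwards [Filter.eventually_le_atBot (-A)] with x hx
      have hx0 : x < 0 := lt_of_le_of_lt hx (by linarith)
      have hd := decay_left hbc hσ hA hsign hx
      rw [Real.norm_eq_abs, abs_mul, abs_neg, abs_pow, abs_neg, abs_of_neg hx0, abs_of_pos (hFpos x)]
      calc (-x)^(k+1) * F x ≤ (-x)^(k+1) * (F (-A) * Real.exp ((2*γ)*(x+A))) := by
            apply mul_le_mul_of_nonneg_left hd (pow_nonneg (by linarith) _)
        _ = F (-A) * Real.exp ((2*γ)*A) * ((-x)^(k+1) * Real.exp (-(2*γ) * (-x))) := by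
            rw [show (2*γ)*(x+A) = (2*γ)*A + -(2*γ)*(-x) by ring, Real.exp_add]; ring
    · exact (tendsto_pow_exp_decay hγ (k+1) (F (-A) * Real.exp ((2*γ)*A))).comp
        Filter.tendsto_neg_atBot_atTop
  have hintL : ∫ x in Iic (0:ℝ), D x = 0 := by
    have := integral_Iic_of_hasDerivAt_of_tendsto (a := (0:ℝ))
      (f := fun y : ℝ => -((-y)^(k+1)) * F y) (f' := D)
      (((continuous_pow (k+1)).comp continuous_neg).neg.mul hFc).continuousWithinAt hderivL
      hD.integrableOn htendL
    rw [this]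
    simp
  refine ⟨hI2, ?_⟩
  have hsum := intervalIntegral.integral_Iic_add_Ioi (b := (0:ℝ)) hD.integrableOn hD.integrableOn
  rw [hintL, hintR] at hsum
  simpa using hsum.symm


lemma integrable_xb_F (hbc : Continuous b) {C : ℝ} (hgrow : ∀ x : ℝ, |b x| ≤ C * (1 + |x|))
    (hσ : 0 < σ) (hA : 0 < A) (hγ : 0 < γ)
    (hsign : ∀ x : ℝ, A ≤ |x| → b x * Real.sign x / σ ^ 2 ≤ -γ) (k : ℕ) :
    Integrable (fun x : ℝ => |x| ^ k * x * b x *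
      Real.exp (∫ u in (0:ℝ)..x, 2 * b u / σ ^ 2)) := by
  set F : ℝ → ℝ := fun x => Real.exp (∫ u in (0:ℝ)..x, 2 * b u / σ ^ 2) with hF_def
  have hGc : Continuous (fun x : ℝ => ∫ u in (0:ℝ)..x, 2 * b u / σ ^ 2) :=
    continuous_iff_continuousAt.2
      (fun x => (((by fun_prop : Continuous (fun u : ℝ => 2 * b u / σ ^ 2)).integral_hasStrictDerivAt
        0 x).hasDerivAt).continuousAt)
  have hFc : Continuous F := Real.continuous_exp.comp hGc
  have hFpos : ∀ x, 0 < F x := fun x => Real.exp_pos _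
  have hC0 : (0:ℝ) ≤ C := le_trans (abs_nonneg (b 0)) (by simpa using hgrow 0)
  have hIpow : ∀ m : ℕ, Integrable (fun x : ℝ => |x| ^ m * F x) :=
    fun m => integrable_pow_mul_F hbc hσ hA hγ hsign m
  apply Integrable.mono' (((hIpow (k+1)).add (hIpow (k+2))).const_mul C)
  · exact ((((continuous_abs.pow k).mul continuous_id).mul hbc).mul hFc).aestronglyMeasurable
  · filter_upwards with x
    rw [Real.norm_eq_abs, abs_mul, abs_mul, abs_mul, abs_pow, abs_abs,
      abs_of_pos (hFpos x), Pi.add_apply]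
    calc |x|^k * |x| * |b x| * F x ≤ |x|^k * |x| * (C * (1+|x|)) * F x := by
          apply mul_le_mul_of_nonneg_right _ (hFpos x).le
          apply mul_le_mul_of_nonneg_left (hgrow x) (by positivity)
      _ = C * (|x|^(k+1) * F x + |x|^(k+2) * F x) := by ring

end


/-- The paper's class `Lip_loc(ℝ)` of locally Lipschitz functions. -/
def LipLoc (f : ℝ → ℝ) : Prop :=
  ∀ n : ℕ, ∃ L : ℝ, ∀ x y : ℝ, |x| ≤ n → |y| ≤ n → |f x - f y| ≤ L * |x - y|

lemma LipLoc.continuous {f : ℝ → ℝ} (hf : LipLoc f) : Continuous f := by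
  rw [continuous_iff_continuousAt]
  intro x
  obtain ⟨n, hn⟩ := exists_nat_gt |x|
  obtain ⟨L, hL⟩ := hf n
  have hmem : Metric.closedBall (0:ℝ) n ∈ nhds x :=
    Metric.closedBall_mem_nhds_of_mem (by simpa [Real.dist_eq] using hn)
  have hco : ContinuousOn f (Metric.closedBall (0:ℝ) n) := by
    apply LipschitzOnWith.continuousOn (K := Real.toNNReal L)
    rw [lipschitzOnWith_iff_dist_le_mul]
    intro y hy z hz
    simp only [Metric.mem_closedBall, Real.dist_eq, sub_zero] at hy hz
    calc dist (f y) (f z) = |f y - f z| := by rw [Real.dist_eq]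
      _ ≤ L * |y - z| := hL y z hy hz
      _ ≤ Real.toNNReal L * |y - z| :=
          mul_le_mul_of_nonneg_right (Real.le_coe_toNNReal L) (abs_nonneg _)
      _ = Real.toNNReal L * dist y z := by rw [Real.dist_eq]
  exact hco.continuousAt hmem

/-- The drift class `Σ(C, A, γ, σ)`. -/
def driftClass (C A γ σ : ℝ) : Set (ℝ → ℝ) :=
  {b | LipLoc b ∧ (∀ x : ℝ, |b x| ≤ C * (1 + |x|)) ∧
    ∀ x : ℝ, A ≤ |x| → b x * Real.sign x / σ ^ 2 ≤ -γ}

/-- The normalizing constant `C_{b,σ} = ∫_ℝ exp(∫₀ˣ 2 b(u)/σ² du) dx`. -/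
noncomputable def normConst (b : ℝ → ℝ) (σ : ℝ) : ℝ :=
  ∫ x : ℝ, Real.exp (∫ u in (0:ℝ)..x, 2 * b u / σ ^ 2)

/-- The invariant density `q_b(x) = C_{b,σ}⁻¹ exp(∫₀ˣ 2 b(u)/σ² du)`. -/
noncomputable def invDensity (b : ℝ → ℝ) (σ : ℝ) (x : ℝ) : ℝ :=
  (normConst b σ)⁻¹ * Real.exp (∫ u in (0:ℝ)..x, 2 * b u / σ ^ 2)

/-- For `n ≥ 2`, `n·E[|ξ|^{n-2} ξ b(ξ)] + (n(n-1)/2)·σ²·E[|ξ|^{n-2}] = 0` for `ξ ∼ q_b`,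
including absolute convergence of both integrals. -/
theorem stmt3 (C A γ σ : ℝ) (hC : 1 ≤ C) (hA : 0 < A) (hγ : 0 < γ) (hσ : 0 < σ)
    (b : ℝ → ℝ) (hb : b ∈ driftClass C A γ σ) (n : ℕ) (hn : 2 ≤ n) :
    Integrable (fun x : ℝ => |x| ^ (n - 2) * x * b x * invDensity b σ x) ∧
    Integrable (fun x : ℝ => |x| ^ (n - 2) * invDensity b σ x) ∧
    (n : ℝ) * (∫ x : ℝ, |x| ^ (n - 2) * x * b x * invDensity b σ x) +
        (n : ℝ) * ((n : ℝ) - 1) / 2 * σ ^ 2 *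
          (∫ x : ℝ, |x| ^ (n - 2) * invDensity b σ x) = 0 := by
  obtain ⟨hlip, hgrow, hsign⟩ := hb
  have hbc : Continuous b := hlip.continuous
  obtain ⟨k, rfl⟩ : ∃ k, n = k + 2 := ⟨n - 2, by omega⟩
  simp only [Nat.add_sub_cancel, invDensity]
  set c : ℝ := (normConst b σ)⁻¹ with hc_def
  set F : ℝ → ℝ := fun x => Real.exp (∫ u in (0:ℝ)..x, 2 * b u / σ ^ 2) with hF_def
  have hIb : Integrable (fun x : ℝ => |x| ^ k * x * b x * F x) :=
    integrable_xb_F hbc hgrow hσ hA hγ hsign k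
  have hIpow : Integrable (fun x : ℝ => |x| ^ k * F x) :=
    integrable_pow_mul_F hbc hσ hA hγ hsign k
  obtain ⟨hI2, hzero⟩ := key_zero hbc hgrow hσ hA hγ hsign k
  have hT1 : Integrable (fun x : ℝ => |x| ^ k * x * b x * (c * F x)) := by
    apply (hIb.const_mul c).congr
    filter_upwards with x
    ring
  have hT2 : Integrable (fun x : ℝ => |x| ^ k * (c * F x)) := by
    apply (hIpow.const_mul c).congr
    filter_upwards with x
    ring
  refine ⟨hT1, hT2, ?_⟩
  have he1 : (fun x : ℝ => |x| ^ k * x * b x * (c * F x))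
      = fun x : ℝ => c * (|x| ^ k * x * b x * F x) := funext fun x => by ring
  have he2 : (fun x : ℝ => |x| ^ k * (c * F x))
      = fun x : ℝ => c * (|x| ^ k * F x) := funext fun x => by ring
  rw [he1, he2, integral_const_mul, integral_const_mul]
  -- split hzero
  have hE1 : Integrable (fun x : ℝ => ((k:ℝ)+1) * |x| ^ k * F x) := by
    apply (hIpow.const_mul ((k:ℝ)+1)).congr
    filter_upwards with x
    ring
  rw [integral_add hE1 hI2] at hzero
  have he3 : (fun x : ℝ => ((k:ℝ)+1) * |x| ^ k * F x)
      = fun x : ℝ => ((k:ℝ)+1) * (|x| ^ k * F x) := funext fun x => by ring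
  have he4 : (fun x : ℝ => |x| ^ k * x * (2 * b x / σ ^ 2) * F x)
      = fun x : ℝ => (2 / σ ^ 2) * (|x| ^ k * x * b x * F x) := funext fun x => by ring
  rw [he3, he4, integral_const_mul, integral_const_mul] at hzero
  set IF1 : ℝ := ∫ x : ℝ, |x| ^ k * x * b x * F x
  set IF2 : ℝ := ∫ x : ℝ, |x| ^ k * F x
  have hσ2 : (σ:ℝ) ^ 2 ≠ 0 := by positivity
  push_cast
  field_simp at hzero
  linear_combination (c * ((k:ℝ)+2) / 2) * hzero
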